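/- For natural numbers p and q, let C^{p,q} denote the Clifford algebra over ℝ of the quadratic form on ℝ^{p+q} given by −(x₁)² − … − (x_p)² + (x_{p+1})² + … + (x_{p+q})². Then there is an isomorphism of ℝ-algebras C^{p+1,q+1} ≃ Matrix (Fin 2) (Fin 2) (C^{p,q}). -/

import Mathlib

open CliffordAlgebra

/-- The diagonal quadratic form on `ℝ^(p+q)` with `p` coefficients `−1` and `q`
coefficients `+1`:  `−x₁² − … − x_p² + x_{p+1}² + … + x_{p+q}²`. -/
noncomputable def Qpq (p q : ℕ) : QuadraticForm ℝ (Fin (p + q) → ℝ) :=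
  QuadraticMap.weightedSumSquares ℝ (fun i => if (i : ℕ) < p then (-1 : ℝ) else 1)

/-- The Clifford algebra `C^{p,q}`. -/
noncomputable abbrev Cpq (p q : ℕ) : Type :=
  CliffordAlgebra (Qpq p q)

namespace Per

variable (p q : ℕ)

def ip : Fin (p + 1 + (q + 1)) := ⟨p, by omega⟩
def iq : Fin (p + 1 + (q + 1)) := ⟨p + q + 1, by omega⟩
def eps (j : Fin (p + q)) : Fin (p + 1 + (q + 1)) :=
  ⟨if (j : ℕ) < p then (j : ℕ) else (j : ℕ) + 1, by split <;> omega⟩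

lemma eps_ne_ip (j : Fin (p + q)) : eps p q j ≠ ip p q := by
  simp only [eps, ip, Ne, Fin.mk.injEq]
  split <;> omega

lemma eps_ne_iq (j : Fin (p + q)) : eps p q j ≠ iq p q := by
  simp only [eps, iq, Ne, Fin.mk.injEq]
  split <;> omega

lemma ip_ne_iq : ip p q ≠ iq p q := by
  simp only [ip, iq, Ne, Fin.mk.injEq]; omega

lemma eps_injective : Function.Injective (eps p q) := by
  intro a b h
  simp only [eps, Fin.mk.injEq] at h
  split_ifs at h <;> (apply Fin.ext; omega)

def extFun (w : Fin (p + q) → ℝ) (i : Fin (p + 1 + (q + 1))) : ℝ :=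
  if h : (i : ℕ) < p then w ⟨i, by omega⟩
  else if h2 : p + 1 ≤ (i : ℕ) ∧ (i : ℕ) < p + q + 1 then w ⟨(i : ℕ) - 1, by omega⟩
  else 0

lemma extFun_eps (w : Fin (p + q) → ℝ) (j : Fin (p + q)) :
    extFun p q w (eps p q j) = w j := by
  rcases lt_or_ge (j : ℕ) p with h | h
  · have h1 : ((eps p q j : ℕ)) = (j : ℕ) := by simp [eps, h]
    rw [extFun, dif_pos (by omega)]
    congr 1
    exact Fin.ext (by simp [h1])
  · have h1 : ((eps p q j : ℕ)) = (j : ℕ) + 1 := by simp [eps]; omega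
    rw [extFun, dif_neg (by omega), dif_pos (by constructor <;> omega)]
    congr 1
    exact Fin.ext (by simp [h1])

lemma extFun_ip (w : Fin (p + q) → ℝ) : extFun p q w (ip p q) = 0 := by
  rw [extFun, dif_neg (by simp only [ip]; omega), dif_neg (by simp only [ip]; omega)]

lemma extFun_iq (w : Fin (p + q) → ℝ) : extFun p q w (iq p q) = 0 := by
  rw [extFun, dif_neg (by simp only [iq]; omega), dif_neg (by simp only [iq]; omega)]

lemma extFun_mem (w : Fin (p + q) → ℝ) (i : Fin (p + 1 + (q + 1)))
    (h : extFun p q w i ≠ 0) : ∃ j, eps p q j = i := by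
  by_cases h1 : (i : ℕ) < p
  · exact ⟨⟨i, by omega⟩, Fin.ext (by simp [eps, h1])⟩
  · by_cases h2 : p + 1 ≤ (i : ℕ) ∧ (i : ℕ) < p + q + 1
    · refine ⟨⟨(i : ℕ) - 1, by omega⟩, Fin.ext ?_⟩
      simp only [eps]
      rw [if_neg (by omega)]
      omega
    · rw [extFun, dif_neg h1, dif_neg h2] at h
      exact absurd rfl h

lemma vdecomp (v : Fin (p + 1 + (q + 1)) → ℝ) :
    v = extFun p q (fun j => v (eps p q j)) + v (ip p q) • (Pi.single (ip p q) 1 : Fin (p + 1 + (q + 1)) → ℝ)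
        + v (iq p q) • (Pi.single (iq p q) 1 : Fin (p + 1 + (q + 1)) → ℝ) := by
  funext i
  simp only [Pi.add_apply, Pi.smul_apply, smul_eq_mul]
  by_cases h1 : (i : ℕ) < p
  · have e1 : eps p q ⟨(i : ℕ), by omega⟩ = i := Fin.ext (by simp [eps, h1])
    rw [extFun, dif_pos h1, e1,
      Pi.single_eq_of_ne (by simp [ip, Fin.ext_iff]; omega) 1,
      Pi.single_eq_of_ne (by simp [iq, Fin.ext_iff]; omega) 1]
    ring
  · by_cases h2 : (i : ℕ) = p
    · have : i = ip p q := Fin.ext (by simp [ip, h2])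
      subst this
      rw [extFun_ip, Pi.single_eq_same, Pi.single_eq_of_ne (ip_ne_iq p q) 1]
      ring
    · by_cases h3 : (i : ℕ) < p + q + 1
      · have e1 : eps p q ⟨(i : ℕ) - 1, by omega⟩ = i := by
          apply Fin.ext
          simp only [eps]
          rw [if_neg (by omega)]
          omega
        rw [extFun, dif_neg h1, dif_pos (by omega), e1,
          Pi.single_eq_of_ne (by simp [ip, Fin.ext_iff]; omega) 1,
          Pi.single_eq_of_ne (by simp [iq, Fin.ext_iff]; omega) 1]
        ring
      · have : i = iq p q := Fin.ext (by simp [iq]; omega)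
        subst this
        rw [extFun_iq, Pi.single_eq_same, Pi.single_eq_of_ne (Ne.symm (ip_ne_iq p q)) 1]
        ring


def extL : (Fin (p + q) → ℝ) →ₗ[ℝ] (Fin (p + 1 + (q + 1)) → ℝ) where
  toFun := extFun p q
  map_add' x y := by
    funext i
    simp only [extFun, Pi.add_apply]
    split_ifs <;> simp
  map_smul' c x := by
    funext i
    simp only [extFun, Pi.smul_apply, RingHom.id_apply, smul_eq_mul]
    split_ifs <;> simp

lemma polar_zero {n : ℕ} (c : Fin n → ℝ) (x y : Fin n → ℝ) (h : ∀ i, x i * y i = 0) :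
    QuadraticMap.polar (QuadraticMap.weightedSumSquares ℝ c) x y = 0 := by
  simp only [QuadraticMap.polar, QuadraticMap.weightedSumSquares_apply, Pi.add_apply,
    smul_eq_mul]
  rw [← Finset.sum_sub_distrib, ← Finset.sum_sub_distrib]
  exact Finset.sum_eq_zero fun i _ => by linear_combination (2 * c i) * h i

lemma Q_single {n : ℕ} (c : Fin n → ℝ) (i : Fin n) (a : ℝ) :
    QuadraticMap.weightedSumSquares ℝ c (Pi.single i a) = c i * (a * a) := by
  simp only [QuadraticMap.weightedSumSquares_apply, smul_eq_mul]
  rw [Finset.sum_eq_single i]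
  · rw [Pi.single_eq_same]
  · intro b _ hb
    rw [Pi.single_eq_of_ne hb]
    ring
  · intro hi
    exact absurd (Finset.mem_univ i) hi

lemma Qext (w : Fin (p + q) → ℝ) :
    Qpq (p + 1) (q + 1) (extFun p q w) = Qpq p q w := by
  simp only [Qpq, QuadraticMap.weightedSumSquares_apply, smul_eq_mul]
  have hzero : ∀ i ∈ Finset.univ, i ∉ Finset.univ.image (eps p q) →
      (if (i : ℕ) < p + 1 then (-1:ℝ) else 1) * (extFun p q w i * extFun p q w i) = 0 := by
    intro i _ hi
    rcases eq_or_ne (extFun p q w i) 0 with h | h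
    · rw [h]; ring
    · obtain ⟨j, hj⟩ := extFun_mem p q w i h
      exact absurd (Finset.mem_image.mpr ⟨j, Finset.mem_univ j, hj⟩) hi
  rw [← Finset.sum_subset (Finset.subset_univ _) hzero,
    Finset.sum_image (fun a _ b _ h => eps_injective p q h)]
  refine Finset.sum_congr rfl fun j _ => ?_
  rw [extFun_eps]
  congr 1
  simp only [eps]
  split_ifs with h1 h2 h2 <;> first | rfl | omega

lemma Qv (v : Fin (p + 1 + (q + 1)) → ℝ) :
    Qpq (p + 1) (q + 1) v = Qpq p q (fun j => v (eps p q j))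
      + (v (iq p q) * v (iq p q) - v (ip p q) * v (ip p q)) := by
  set sp : Fin (p + 1 + (q + 1)) → ℝ := Pi.single (ip p q) 1 with hsp
  set sq : Fin (p + 1 + (q + 1)) → ℝ := Pi.single (iq p q) 1 with hsq
  set x : Fin (p + 1 + (q + 1)) → ℝ := extFun p q (fun j => v (eps p q j)) with hx
  have hxip : x (ip p q) = 0 := extFun_ip p q _
  have hxiq : x (iq p q) = 0 := extFun_iq p q _
  conv_lhs => rw [vdecomp p q v]
  rw [← hsp, ← hsq, ← hx]
  rw [QuadraticMap.map_add (⇑(Qpq (p + 1) (q + 1))) (x + v (ip p q) • sp) (v (iq p q) • sq),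
    QuadraticMap.map_add (⇑(Qpq (p + 1) (q + 1))) x (v (ip p q) • sp)]
  have h1 : QuadraticMap.polar (Qpq (p + 1) (q + 1)) x (v (ip p q) • sp) = 0 := by
    apply polar_zero
    intro i
    by_cases hi : i = ip p q
    · subst hi; rw [hxip]; ring
    · rw [hsp, Pi.smul_apply, Pi.single_eq_of_ne hi, smul_zero]; ring
  have h2 : QuadraticMap.polar (Qpq (p + 1) (q + 1)) (x + v (ip p q) • sp) (v (iq p q) • sq) = 0 := by
    apply polar_zero
    intro i
    by_cases hi : i = iq p q
    · subst hi
      rw [Pi.add_apply, hxiq, hsp, Pi.smul_apply, Pi.single_eq_of_ne (Ne.symm (ip_ne_iq p q)), smul_zero]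
      ring
    · rw [hsq, Pi.smul_apply, Pi.single_eq_of_ne hi, smul_zero]; ring
  rw [h1, h2, QuadraticMap.map_smul, QuadraticMap.map_smul]
  have hQsp : Qpq (p + 1) (q + 1) sp = -1 := by
    rw [hsp, Qpq, Q_single]
    rw [if_pos (by simp [ip])]
    ring
  have hQsq : Qpq (p + 1) (q + 1) sq = 1 := by
    rw [hsq, Qpq, Q_single]
    rw [if_neg (by simp [iq])]
    ring
  have hQx : Qpq (p + 1) (q + 1) x = Qpq p q (fun j => v (eps p q j)) := Qext p q _
  rw [hQsp, hQsq, hQx]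
  simp only [smul_eq_mul]
  ring


lemma Qsp : Qpq (p + 1) (q + 1) (Pi.single (ip p q) 1) = -1 := by
  rw [Qpq, Q_single, if_pos (by simp [ip])]; ring

lemma Qsq : Qpq (p + 1) (q + 1) (Pi.single (iq p q) 1) = 1 := by
  rw [Qpq, Q_single, if_neg (by simp [iq])]; ring

noncomputable def eB : Cpq (p + 1) (q + 1) := ι (Qpq (p + 1) (q + 1)) (Pi.single (ip p q) 1)
noncomputable def fB : Cpq (p + 1) (q + 1) := ι (Qpq (p + 1) (q + 1)) (Pi.single (iq p q) 1)
noncomputable def uB (w : Fin (p + q) → ℝ) : Cpq (p + 1) (q + 1) :=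
  ι (Qpq (p + 1) (q + 1)) (extFun p q w)

lemma anticomm {a b : ℕ} {v w : Fin (a + b) → ℝ} (h : ∀ i, v i * w i = 0) :
    ι (Qpq a b) w * ι (Qpq a b) v = -(ι (Qpq a b) v * ι (Qpq a b) w) := by
  have h0 := ι_mul_ι_add_swap (Q := Qpq a b) v w
  have hp : QuadraticMap.polar (⇑(Qpq a b)) v w = 0 :=
    polar_zero (fun i => if (i : ℕ) < a then (-1 : ℝ) else 1) v w h
  rw [hp, map_zero] at h0
  exact eq_neg_of_add_eq_zero_right h0

lemma single_disj {n : ℕ} {i j : Fin n} (hij : i ≠ j) (k : Fin n) :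
    (Pi.single i 1 : Fin n → ℝ) k * (Pi.single j 1 : Fin n → ℝ) k = 0 := by
  by_cases hk : k = i
  · subst hk; rw [Pi.single_eq_of_ne hij]; ring
  · rw [Pi.single_eq_of_ne hk]; ring

lemma ext_sp_disj (w : Fin (p + q) → ℝ) (k : Fin (p + 1 + (q + 1))) :
    extFun p q w k * (Pi.single (ip p q) 1 : Fin (p + 1 + (q + 1)) → ℝ) k = 0 := by
  by_cases hk : k = ip p q
  · subst hk; rw [extFun_ip]; ring
  · rw [Pi.single_eq_of_ne hk]; ring

lemma ext_sq_disj (w : Fin (p + q) → ℝ) (k : Fin (p + 1 + (q + 1))) :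
    extFun p q w k * (Pi.single (iq p q) 1 : Fin (p + 1 + (q + 1)) → ℝ) k = 0 := by
  by_cases hk : k = iq p q
  · subst hk; rw [extFun_iq]; ring
  · rw [Pi.single_eq_of_ne hk]; ring

lemma he2 : eB p q * eB p q = -1 := by
  rw [eB, ι_sq_scalar, Qsp, map_neg, map_one]

lemma hf2 : fB p q * fB p q = 1 := by
  rw [fB, ι_sq_scalar, Qsq, map_one]

lemma hfe : fB p q * eB p q = -(eB p q * fB p q) :=
  anticomm (single_disj (ip_ne_iq p q))

lemma heu (w : Fin (p + q) → ℝ) : eB p q * uB p q w = -(uB p q w * eB p q) :=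
  anticomm (ext_sp_disj p q w)

lemma hfu (w : Fin (p + q) → ℝ) : fB p q * uB p q w = -(uB p q w * fB p q) :=
  anticomm (ext_sq_disj p q w)

lemma hu2 (w : Fin (p + q) → ℝ) :
    uB p q w * uB p q w = algebraMap ℝ _ (Qpq p q w) := by
  rw [uB, ι_sq_scalar, Qext]

noncomputable def L : (Fin (p + 1 + (q + 1)) → ℝ) →ₗ[ℝ] Matrix (Fin 2) (Fin 2) (Cpq p q) where
  toFun v :=
    !![ι (Qpq p q) (fun j => v (eps p q j)),
        algebraMap ℝ (Cpq p q) (v (ip p q) + v (iq p q));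
      algebraMap ℝ (Cpq p q) (v (iq p q) - v (ip p q)),
        -(ι (Qpq p q) (fun j => v (eps p q j)))]
  map_add' v w := by
    have hv : (ι (Qpq p q) fun j => v (eps p q j) + w (eps p q j))
        = (ι (Qpq p q) fun j => v (eps p q j)) + (ι (Qpq p q) fun j => w (eps p q j)) :=
      map_add (ι (Qpq p q)) (fun j => v (eps p q j)) (fun j => w (eps p q j))
    ext i j
    fin_cases i <;> fin_cases j <;>
      simp [hv, map_add, Pi.add_apply, map_sub] <;> abel
  map_smul' c v := by
    have hv : (ι (Qpq p q) fun j => c * v (eps p q j))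
        = c • (ι (Qpq p q) fun j => v (eps p q j)) :=
      map_smul (ι (Qpq p q)) c (fun j => v (eps p q j))
    ext i j
    fin_cases i <;> fin_cases j <;>
      simp [hv, Pi.smul_apply, smul_eq_mul, Algebra.smul_def, map_mul, mul_add,
        mul_sub, map_sub, map_add]

lemma hL (v : Fin (p + 1 + (q + 1)) → ℝ) :
    L p q v * L p q v = algebraMap ℝ (Matrix (Fin 2) (Fin 2) (Cpq p q)) (Qpq (p + 1) (q + 1) v) := by
  have hx2 : ι (Qpq p q) (fun j => v (eps p q j)) * ι (Qpq p q) (fun j => v (eps p q j))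
      = algebraMap ℝ (Cpq p q) (Qpq p q (fun j => v (eps p q j))) := ι_sq_scalar _ _
  ext i j
  rw [Matrix.mul_apply]
  fin_cases i <;> fin_cases j <;>
    simp only [L, LinearMap.coe_mk, AddHom.coe_mk, Fin.sum_univ_two, Fin.zero_eta, Fin.mk_one,
      Fin.isValue, Matrix.of_apply, Matrix.cons_val', Matrix.cons_val_zero, Matrix.cons_val_one,
      Matrix.head_cons, Matrix.empty_val', Matrix.cons_val_fin_one, Matrix.head_fin_const,
      Matrix.algebraMap_matrix_apply, if_true, reduceIte, mul_neg, neg_mul, neg_neg]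
  · rw [hx2, ← map_mul, ← map_add, Qv p q v]
    congr 1
    ring
  · rw [Algebra.commutes]
    simp
  · rw [Algebra.commutes]
    simp
  · rw [hx2, ← map_mul, ← map_add, Qv p q v]
    congr 1
    ring

noncomputable def F : Cpq (p + 1) (q + 1) →ₐ[ℝ] Matrix (Fin 2) (Fin 2) (Cpq p q) :=
  CliffordAlgebra.lift (Qpq (p + 1) (q + 1)) ⟨L p q, hL p q⟩

lemma F_ι (v : Fin (p + 1 + (q + 1)) → ℝ) : F p q (ι (Qpq (p + 1) (q + 1)) v) = L p q v :=
  lift_ι_apply _ _ _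


lemma hcu (w : Fin (p + q) → ℝ) :
    (eB p q * fB p q) * uB p q w = uB p q w * (eB p q * fB p q) := by
  rw [mul_assoc, hfu, mul_neg, ← mul_assoc, heu, neg_mul, neg_neg, mul_assoc]

lemma hfef : fB p q * (eB p q * fB p q) = -(eB p q) := by
  rw [← mul_assoc, hfe, neg_mul, mul_assoc, hf2, mul_one]

lemma hc2 : (eB p q * fB p q) * (eB p q * fB p q) = 1 := by
  rw [mul_assoc, hfef, mul_neg, he2, neg_neg]

noncomputable def phiL : (Fin (p + q) → ℝ) →ₗ[ℝ] Cpq (p + 1) (q + 1) where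
  toFun w := uB p q w * (eB p q * fB p q)
  map_add' x y := by
    have h : extFun p q (x + y) = extFun p q x + extFun p q y := map_add (extL p q) x y
    simp [uB, h, map_add, add_mul]
  map_smul' c x := by
    have h : extFun p q (c • x) = c • extFun p q x := map_smul (extL p q) c x
    simp [uB, h, map_smul, smul_mul_assoc]

lemma hphi (w : Fin (p + q) → ℝ) :
    phiL p q w * phiL p q w = algebraMap ℝ (Cpq (p + 1) (q + 1)) (Qpq p q w) := by
  show (uB p q w * (eB p q * fB p q)) * (uB p q w * (eB p q * fB p q)) = _
  rw [mul_assoc, ← mul_assoc (eB p q * fB p q) (uB p q w) (eB p q * fB p q), hcu,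
    mul_assoc (uB p q w) (eB p q * fB p q) (eB p q * fB p q), hc2, mul_one, hu2]

noncomputable def phi : Cpq p q →ₐ[ℝ] Cpq (p + 1) (q + 1) :=
  CliffordAlgebra.lift (Qpq p q) ⟨phiL p q, hphi p q⟩

lemma phi_ι (w : Fin (p + q) → ℝ) :
    phi p q (ι (Qpq p q) w) = uB p q w * (eB p q * fB p q) :=
  lift_ι_apply _ _ _

noncomputable def tB : Cpq (p + 1) (q + 1) := eB p q * fB p q
noncomputable def P00 : Cpq (p + 1) (q + 1) := (2⁻¹ : ℝ) • (1 + tB p q)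
noncomputable def P11 : Cpq (p + 1) (q + 1) := (2⁻¹ : ℝ) • (1 - tB p q)
noncomputable def P01 : Cpq (p + 1) (q + 1) := fB p q * P11 p q
noncomputable def P10 : Cpq (p + 1) (q + 1) := P11 p q * fB p q

lemma htt : tB p q * tB p q = 1 := hc2 p q
lemma htf : tB p q * fB p q = eB p q := by rw [tB, mul_assoc, hf2, mul_one]
lemma hft : fB p q * tB p q = -(tB p q * fB p q) := by rw [htf, tB, hfef]
lemma htt' (x : Cpq (p + 1) (q + 1)) : tB p q * (tB p q * x) = x := by
  rw [← mul_assoc, htt, one_mul]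
lemma hff' (x : Cpq (p + 1) (q + 1)) : fB p q * (fB p q * x) = x := by
  rw [← mul_assoc, hf2, one_mul]
lemma hft' (x : Cpq (p + 1) (q + 1)) : fB p q * (tB p q * x) = -(tB p q * (fB p q * x)) := by
  rw [← mul_assoc, hft, neg_mul, mul_assoc]

noncomputable def psiL : Matrix (Fin 2) (Fin 2) ℝ →ₗ[ℝ] Cpq (p + 1) (q + 1) where
  toFun m := m 0 0 • P00 p q + m 0 1 • P01 p q + m 1 0 • P10 p q + m 1 1 • P11 p q
  map_add' x y := by
    simp only [Matrix.add_apply, add_smul]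
    abel
  map_smul' c x := by
    simp only [Matrix.smul_apply, smul_eq_mul, RingHom.id_apply, smul_add, smul_smul]

lemma psiL_apply (m : Matrix (Fin 2) (Fin 2) ℝ) :
    psiL p q m = m 0 0 • P00 p q + m 0 1 • P01 p q + m 1 0 • P10 p q + m 1 1 • P11 p q := rfl

lemma psiL_one : psiL p q 1 = 1 := by
  rw [psiL_apply]
  norm_num [Matrix.one_apply, P00, P11, smul_add, smul_sub]
  rw [← add_smul]
  norm_num

lemma psiL_mul (x y : Matrix (Fin 2) (Fin 2) ℝ) : psiL p q (x * y) = psiL p q x * psiL p q y := by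
  rw [psiL_apply, psiL_apply, psiL_apply]
  simp only [Matrix.mul_apply, Fin.sum_univ_two]
  simp only [P00, P01, P10, P11, smul_add, smul_sub, add_mul, mul_add, sub_mul, mul_sub,
    smul_mul_assoc, mul_smul_comm, mul_one, one_mul, mul_assoc, smul_smul,
    htt, htt', hf2, hff', hft, hft', mul_neg, neg_mul, smul_neg, neg_neg]
  match_scalars <;> ring


noncomputable def psi : Matrix (Fin 2) (Fin 2) ℝ →ₐ[ℝ] Cpq (p + 1) (q + 1) :=
  AlgHom.ofLinearMap (psiL p q) (psiL_one p q) (psiL_mul p q)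

lemma psi_apply (m : Matrix (Fin 2) (Fin 2) ℝ) : psi p q m = psiL p q m := rfl

lemma hee' (x : Cpq (p + 1) (q + 1)) : eB p q * (eB p q * x) = -x := by
  rw [← mul_assoc, he2, neg_one_mul]
lemma hfe' (x : Cpq (p + 1) (q + 1)) : fB p q * (eB p q * x) = -(eB p q * (fB p q * x)) := by
  rw [← mul_assoc, hfe, neg_mul, mul_assoc]
lemma heu' (w : Fin (p + q) → ℝ) (x : Cpq (p + 1) (q + 1)) :
    eB p q * (uB p q w * x) = -(uB p q w * (eB p q * x)) := by
  rw [← mul_assoc, heu, neg_mul, mul_assoc]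
lemma hfu' (w : Fin (p + q) → ℝ) (x : Cpq (p + 1) (q + 1)) :
    fB p q * (uB p q w * x) = -(uB p q w * (fB p q * x)) := by
  rw [← mul_assoc, hfu, neg_mul, mul_assoc]

lemma commute_ef (a : Cpq p q) : Commute (phi p q a) (eB p q) ∧ Commute (phi p q a) (fB p q) := by
  induction a using CliffordAlgebra.induction with
  | algebraMap r =>
    rw [AlgHom.commutes]
    exact ⟨Algebra.commutes r _, Algebra.commutes r _⟩
  | ι w =>
    rw [phi_ι]
    constructor
    · show uB p q w * (eB p q * fB p q) * eB p q = eB p q * (uB p q w * (eB p q * fB p q))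
      simp only [mul_assoc, hee', hfe', heu', hfu', heu, hfu, hfe, he2, hf2,
        mul_neg, neg_mul, neg_neg, mul_one, one_mul]
    · show uB p q w * (eB p q * fB p q) * fB p q = fB p q * (uB p q w * (eB p q * fB p q))
      simp only [mul_assoc, hee', hfe', heu', hfu', heu, hfu, hfe, he2, hf2,
        mul_neg, neg_mul, neg_neg, mul_one, one_mul]
  | mul a b ha hb =>
    rw [map_mul]
    exact ⟨ha.1.mul_left hb.1, ha.2.mul_left hb.2⟩
  | add a b ha hb =>
    rw [map_add]
    exact ⟨ha.1.add_left hb.1, ha.2.add_left hb.2⟩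

lemma hcommute (a : Cpq p q) (m : Matrix (Fin 2) (Fin 2) ℝ) :
    Commute (phi p q a) (psi p q m) := by
  obtain ⟨he, hf⟩ := commute_ef p q a
  have ht : Commute (phi p q a) (tB p q) := he.mul_right hf
  have h00 : Commute (phi p q a) (P00 p q) := ((Commute.one_right _).add_right ht).smul_right _
  have h11 : Commute (phi p q a) (P11 p q) := ((Commute.one_right _).sub_right ht).smul_right _
  have h01 : Commute (phi p q a) (P01 p q) := hf.mul_right h11
  have h10 : Commute (phi p q a) (P10 p q) := h11.mul_right hf
  rw [psi_apply, psiL_apply]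
  exact (((h00.smul_right _).add_right (h01.smul_right _)).add_right
    (h10.smul_right _)).add_right (h11.smul_right _)

noncomputable def G : Matrix (Fin 2) (Fin 2) (Cpq p q) →ₐ[ℝ] Cpq (p + 1) (q + 1) :=
  (Algebra.TensorProduct.lift (phi p q) (psi p q) (hcommute p q)).comp
    (matrixEquivTensor (Fin 2) ℝ (Cpq p q)).toAlgHom

lemma G_std (i j : Fin 2) (a : Cpq p q) :
    G p q (Matrix.single i j a) = phi p q a * psi p q (Matrix.single i j 1) := by
  show Algebra.TensorProduct.lift (phi p q) (psi p q) (hcommute p q)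
    (matrixEquivTensor (Fin 2) ℝ (Cpq p q) (Matrix.single i j a)) = _
  rw [matrixEquivTensor_apply_single, Algebra.TensorProduct.lift_tmul]

lemma psi_std00 : psi p q (Matrix.single 0 0 1) = P00 p q := by
  rw [psi_apply, psiL_apply]
  norm_num [Matrix.single]
lemma psi_std01 : psi p q (Matrix.single 0 1 1) = P01 p q := by
  rw [psi_apply, psiL_apply]
  norm_num [Matrix.single]
lemma psi_std10 : psi p q (Matrix.single 1 0 1) = P10 p q := by
  rw [psi_apply, psiL_apply]
  norm_num [Matrix.single]
lemma psi_std11 : psi p q (Matrix.single 1 1 1) = P11 p q := by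
  rw [psi_apply, psiL_apply]
  norm_num [Matrix.single]

lemma iota_decomp (v : Fin (p + 1 + (q + 1)) → ℝ) :
    ι (Qpq (p + 1) (q + 1)) v
      = uB p q (fun j => v (eps p q j)) + v (ip p q) • eB p q + v (iq p q) • fB p q := by
  conv_lhs => rw [vdecomp p q v]
  rw [map_add, map_add, map_smul, map_smul]
  rfl

lemma GF (v : Fin (p + 1 + (q + 1)) → ℝ) :
    G p q (F p q (ι (Qpq (p + 1) (q + 1)) v)) = ι (Qpq (p + 1) (q + 1)) v := by
  rw [F_ι]
  have hdecomp : L p q v = Matrix.single 0 0 (ι (Qpq p q) fun j => v (eps p q j))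
      + Matrix.single 0 1 (algebraMap ℝ (Cpq p q) (v (ip p q) + v (iq p q)))
      + Matrix.single 1 0 (algebraMap ℝ (Cpq p q) (v (iq p q) - v (ip p q)))
      + Matrix.single 1 1 (-(ι (Qpq p q) fun j => v (eps p q j))) := by
    ext i j
    fin_cases i <;> fin_cases j <;> simp [L, Matrix.single]
  rw [hdecomp, map_add, map_add, map_add, G_std, G_std, G_std, G_std,
    psi_std00, psi_std01, psi_std10, psi_std11, map_neg, phi_ι, AlgHom.commutes,
    AlgHom.commutes, iota_decomp]
  rw [← Algebra.smul_def, ← Algebra.smul_def]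
  simp only [P00, P01, P10, P11, tB, smul_add, smul_sub, mul_add, mul_sub, add_mul, sub_mul,
    neg_mul, mul_neg, neg_neg, mul_one, one_mul, mul_smul_comm, smul_mul_assoc, mul_assoc,
    hee', hfe', heu', hfu', heu, hfu, hfe, he2, hf2, smul_neg, smul_smul]
  match_scalars <;> ring

lemma FphiA (a : Cpq p q) : F p q (phi p q a) = a • (1 : Matrix (Fin 2) (Fin 2) (Cpq p q)) := by
  induction a using CliffordAlgebra.induction with
  | algebraMap r =>
    rw [AlgHom.commutes, AlgHom.commutes]
    ext i j
    fin_cases i <;> fin_cases j <;>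
      simp [Matrix.algebraMap_matrix_apply, Matrix.one_apply, Algebra.smul_def]
  | ι w =>
    rw [phi_ι]
    have hw : (fun j => extFun p q w (eps p q j)) = w := funext (extFun_eps p q w)
    have hz : ι (Qpq p q) (fun _ => (0:ℝ)) = 0 := map_zero _
    have hsep : (fun j => (Pi.single (ip p q) 1 : Fin (p + 1 + (q + 1)) → ℝ) (eps p q j))
        = (fun _ => (0:ℝ)) := funext fun j => Pi.single_eq_of_ne (eps_ne_ip p q j) 1
    have hseq : (fun j => (Pi.single (iq p q) 1 : Fin (p + 1 + (q + 1)) → ℝ) (eps p q j))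
        = (fun _ => (0:ℝ)) := funext fun j => Pi.single_eq_of_ne (eps_ne_iq p q j) 1
    have hLu : F p q (uB p q w) = !![ι (Qpq p q) w, 0; 0, -(ι (Qpq p q) w)] := by
      rw [uB, F_ι]
      ext i j
      fin_cases i <;> fin_cases j <;>
        simp [L, hw, extFun_ip, extFun_iq, hz]
    have hLe : F p q (eB p q)
        = !![0, 1; -1, 0] := by
      rw [eB, F_ι]
      ext i j
      fin_cases i <;> fin_cases j <;>
        simp [L, hsep, hz, Pi.single_eq_same, Pi.single_eq_of_ne (Ne.symm (ip_ne_iq p q))]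
    have hLf : F p q (fB p q)
        = !![0, 1; 1, 0] := by
      rw [fB, F_ι]
      ext i j
      fin_cases i <;> fin_cases j <;>
        simp [L, hseq, hz, Pi.single_eq_same, Pi.single_eq_of_ne (ip_ne_iq p q)]
    rw [map_mul, map_mul, hLu, hLe, hLf]
    ext i j
    fin_cases i <;> fin_cases j <;>
      simp [Matrix.mul_apply, Fin.sum_univ_two, Matrix.one_apply, smul_eq_mul]
  | mul a b ha hb =>
    rw [map_mul, map_mul, ha, hb, smul_mul_assoc, one_mul, smul_smul]
  | add a b ha hb =>
    rw [map_add, map_add, ha, hb, add_smul]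

lemma FeB : F p q (eB p q) = !![0, 1; -1, 0] := by
  have hz : ι (Qpq p q) (fun _ => (0:ℝ)) = 0 := map_zero _
  have hsep : (fun j => (Pi.single (ip p q) 1 : Fin (p + 1 + (q + 1)) → ℝ) (eps p q j))
      = (fun _ => (0:ℝ)) := funext fun j => Pi.single_eq_of_ne (eps_ne_ip p q j) 1
  rw [eB, F_ι]
  ext i j
  fin_cases i <;> fin_cases j <;>
    simp [L, hsep, hz, Pi.single_eq_same, Pi.single_eq_of_ne (Ne.symm (ip_ne_iq p q))]

lemma FfB : F p q (fB p q) = !![0, 1; 1, 0] := by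
  have hz : ι (Qpq p q) (fun _ => (0:ℝ)) = 0 := map_zero _
  have hseq : (fun j => (Pi.single (iq p q) 1 : Fin (p + 1 + (q + 1)) → ℝ) (eps p q j))
      = (fun _ => (0:ℝ)) := funext fun j => Pi.single_eq_of_ne (eps_ne_iq p q j) 1
  rw [fB, F_ι]
  ext i j
  fin_cases i <;> fin_cases j <;>
    simp [L, hseq, hz, Pi.single_eq_same, Pi.single_eq_of_ne (ip_ne_iq p q)]

lemma FtB : F p q (tB p q) = !![(1 : Cpq p q), 0; 0, -1] := by
  rw [tB, map_mul, FeB, FfB]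
  ext i j
  fin_cases i <;> fin_cases j <;> simp [Matrix.mul_apply, Fin.sum_univ_two]

lemma FP00 : F p q (P00 p q) = Matrix.single 0 0 (1 : Cpq p q) := by
  rw [P00, map_smul, map_add, map_one, FtB]
  ext i j
  fin_cases i <;> fin_cases j <;>
    simp [Matrix.smul_apply, Matrix.one_apply, Matrix.single] <;>
    (match_scalars <;> norm_num)

lemma FP11 : F p q (P11 p q) = Matrix.single 1 1 (1 : Cpq p q) := by
  rw [P11, map_smul, map_sub, map_one, FtB]
  ext i j
  fin_cases i <;> fin_cases j <;>
    simp [Matrix.smul_apply, Matrix.one_apply, Matrix.single] <;>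
    (match_scalars <;> norm_num)

lemma FP01 : F p q (P01 p q) = Matrix.single 0 1 (1 : Cpq p q) := by
  rw [P01, map_mul, FfB, FP11]
  ext i j
  fin_cases i <;> fin_cases j <;>
    simp [Matrix.mul_apply, Fin.sum_univ_two, Matrix.single]

lemma FP10 : F p q (P10 p q) = Matrix.single 1 0 (1 : Cpq p q) := by
  rw [P10, map_mul, FfB, FP11]
  ext i j
  fin_cases i <;> fin_cases j <;>
    simp [Matrix.mul_apply, Fin.sum_univ_two, Matrix.single]

lemma FG (m : Matrix (Fin 2) (Fin 2) (Cpq p q)) : F p q (G p q m) = m := by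
  have hstd : ∀ (i j : Fin 2) (a : Cpq p q),
      F p q (G p q (Matrix.single i j a)) = Matrix.single i j a := by
    intro i j a
    rw [G_std, map_mul, FphiA]
    have hψ : F p q (psi p q (Matrix.single i j 1)) = Matrix.single i j (1 : Cpq p q) := by
      fin_cases i <;> fin_cases j <;> simp only [Fin.zero_eta, Fin.mk_one]
      · rw [psi_std00, FP00]
      · rw [psi_std01, FP01]
      · rw [psi_std10, FP10]
      · rw [psi_std11, FP11]
    rw [hψ, smul_mul_assoc, one_mul, Matrix.smul_single, smul_eq_mul, mul_one]
  conv_lhs => rw [Matrix.matrix_eq_sum_single m]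
  simp only [map_sum, hstd]
  exact (Matrix.matrix_eq_sum_single m).symm

noncomputable def equivPQ : Cpq (p + 1) (q + 1) ≃ₐ[ℝ] Matrix (Fin 2) (Fin 2) (Cpq p q) :=
  AlgEquiv.ofAlgHom (F p q) (G p q)
    (AlgHom.ext (FG p q))
    (hom_ext (LinearMap.ext (GF p q)))

end Per

/-- `(1,1)`-periodicity of Clifford algebras: `C^{p+1,q+1} ≃ M₂(C^{p,q})`. -/
theorem clifford_one_one_periodicity (p q : ℕ) :
    Nonempty (Cpq (p + 1) (q + 1) ≃ₐ[ℝ] Matrix (Fin 2) (Fin 2) (Cpq p q)) := by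
  exact ⟨Per.equivPQ p q⟩
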